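/- Every Hamiltonian cycle of the line graph L(G'), where G' is obtained from G by subdividing every edge twice, arises from an Euler tour of G': the sequence of edges of G' corresponding to the vertex sequence of the Hamiltonian cycle is an Euler tour of G'. -/

import Mathlib

open SimpleGraph

/-- The smaller endpoint of an edge (under a fixed linear order on the vertices). -/
def Sym2.emin {V : Type} [LinearOrder V] (e : Sym2 V) : V :=
  Sym2.lift ⟨min, fun _ _ => min_comm _ _⟩ e

/-- The larger endpoint of an edge. -/
def Sym2.emax {V : Type} [LinearOrder V] (e : Sym2 V) : V :=
  Sym2.lift ⟨max, fun _ _ => max_comm _ _⟩ e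

/-- Base relation for the graph `G'` obtained from `G` by replacing every edge
`e = (u,v)` by the path `u - x_e - y_e - v`: the new vertices are pairs `(e, b)`
where `(e, false)` is `x_e` (attached to the smaller endpoint of `e`) and
`(e, true)` is `y_e` (attached to the larger endpoint). -/
def subdivRel {V : Type} [LinearOrder V] (G : SimpleGraph V) :
    (V ⊕ (G.edgeSet × Bool)) → (V ⊕ (G.edgeSet × Bool)) → Prop
  | Sum.inl u, Sum.inr (e, b) => b = false ∧ u = Sym2.emin (e : Sym2 V)
  | Sum.inr (e, b), Sum.inl v => b = true ∧ v = Sym2.emax (e : Sym2 V)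
  | Sum.inr (e, b), Sum.inr (e', b') => (e : Sym2 V) = (e' : Sym2 V) ∧ b = false ∧ b' = true
  | _, _ => False

/-- The graph obtained from `G` by subdividing every edge twice
(replacing each edge by a path of length three). -/
def subdiv2 {V : Type} [LinearOrder V] (G : SimpleGraph V) :
    SimpleGraph (V ⊕ (G.edgeSet × Bool)) :=
  SimpleGraph.fromRel (subdivRel G)


open SimpleGraph

namespace EulerAux

variable {α : Type*} {Γ : SimpleGraph α}

lemma dart_fst_ne_end {u v : α} (q : Γ.Walk u v) (hn : q.support.Nodup)
    {d : Γ.Dart} (hd : d ∈ q.darts) : d.fst ≠ v := by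
  induction q with
  | nil => simp at hd
  | @cons u w v h q ih =>
    rw [Walk.support_cons, List.nodup_cons] at hn
    rw [Walk.darts_cons, List.mem_cons] at hd
    rcases hd with rfl | hd
    · exact fun hv => hn.1 (hv ▸ q.end_mem_support)
    · exact ih hn.2 hd

lemma nil_of_support_nodup {v : α} (q : Γ.Walk v v) (hn : q.support.Nodup) :
    q = Walk.nil :=
  Walk.isPath_iff_eq_nil.mp (Walk.IsPath.mk' hn)

lemma dart_into_end_unique {u v : α} (q : Γ.Walk u v) (hn : q.support.Nodup)
    {d d' : Γ.Dart} (hd : d ∈ q.darts) (hd' : d' ∈ q.darts)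
    (h1 : d.snd = v) (h2 : d'.snd = v) : d = d' := by
  induction q with
  | nil => simp at hd
  | @cons u w v h q ih =>
    rw [Walk.support_cons, List.nodup_cons] at hn
    rw [Walk.darts_cons, List.mem_cons] at hd hd'
    have hnil : ∀ d'' : Γ.Dart, d'' ∈ q.darts → d''.snd = v → w = v → False := by
      intro d'' hd'' _ hwv
      subst hwv
      rw [nil_of_support_nodup q hn.2] at hd''
      simp at hd''
    rcases hd with rfl | hd <;> rcases hd' with rfl | hd'
    · rfl
    · exact (hnil d' hd' h2 h1).elim
    · exact (hnil d hd h1 h2).elim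
    · exact ih hn.2 hd hd' h1 h2

lemma exists_dart_into_end : ∀ {u v : α} (q : Γ.Walk u v), q.length ≠ 0 →
    ∃ d ∈ q.darts, d.snd = v
  | u, v, .cons h .nil, _ => ⟨⟨(u, v), h⟩, by rw [Walk.darts_cons]; exact List.mem_cons_self, rfl⟩
  | _, _, .cons h (.cons h' q), _ => by
    obtain ⟨d, hd, h2⟩ := exists_dart_into_end (.cons h' q) (by simp)
    exact ⟨d, by rw [Walk.darts_cons]; exact List.mem_cons_of_mem _ hd, h2⟩

lemma no_antiparallel {u v : α} (q : Γ.Walk u v) (ht : q.edges.Nodup)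
    {d d' : Γ.Dart} (hd : d ∈ q.darts) (hd' : d' ∈ q.darts)
    (h1 : d.fst = d'.snd) (h2 : d.snd = d'.fst) : False := by
  have hne : d ≠ d' := by
    intro h
    subst h
    exact d.fst_ne_snd h1
  have hedge : d.edge = d'.edge := by
    have hp : d.toProd = (d'.snd, d'.fst) := Prod.ext h1 h2
    show s(d.toProd.1, d.toProd.2) = s(d'.toProd.1, d'.toProd.2)
    rw [hp]
    exact Sym2.eq_swap
  exact hne (List.inj_on_of_nodup_map ht hd hd' hedge)

lemma support_getLast {u v : α} (q : Γ.Walk u v) :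
    q.support.getLast q.support_ne_nil = v := by
  induction q with
  | nil => simp
  | @cons u w v h q ih =>
    exact (List.getLast_cons q.support_ne_nil).trans ih

end EulerAux


namespace EulerAux

variable {α : Type*} {Γ : SimpleGraph α}

/-- In a cycle, every vertex has a unique out-dart and a unique in-dart,
and their other ends are distinct. -/
lemma cycle_dart_neighbors {x : α} {c0 : Γ.Walk x x} (hc : c0.IsCycle)
    (a : α) (ha : a ∈ c0.support) :
    ∃ s t : α, s ≠ t ∧
      (∃ d ∈ c0.darts, d.toProd = (a, s)) ∧
      (∃ d ∈ c0.darts, d.toProd = (t, a)) ∧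
      (∀ d ∈ c0.darts, d.fst = a → d.snd = s) ∧
      (∀ d ∈ c0.darts, d.snd = a → d.fst = t) := by
  classical
  set c' := c0.rotate a ha with hc'def
  have hrot : c'.darts ~r c0.darts := c0.rotate_darts a ha
  have hmem : ∀ d : Γ.Dart, d ∈ c'.darts ↔ d ∈ c0.darts := fun d => hrot.mem_iff
  have hcyc : c'.IsCycle := hc.rotate ha
  obtain ⟨b, hab, q, hq⟩ := Walk.not_nil_iff.mp hcyc.not_nil
  have hlen : q.length ≠ 0 := by
    have h3 := hcyc.three_le_length
    rw [hq, Walk.length_cons] at h3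
    omega
  have hnodup : q.support.Nodup := by
    have := hcyc.support_nodup
    rw [hq, Walk.support_cons] at this
    simpa using this
  obtain ⟨dl, hdl, hdl2⟩ := exists_dart_into_end q hlen
  have hqsub : ∀ d ∈ q.darts, d ∈ c'.darts := by
    intro d hd
    rw [hq, Walk.darts_cons]
    exact List.mem_cons_of_mem _ hd
  have hfirst : (⟨(a, b), hab⟩ : Γ.Dart) ∈ c'.darts := by
    rw [hq, Walk.darts_cons]; exact List.mem_cons_self
  refine ⟨b, dl.fst, ?_, ⟨_, (hmem _).mp hfirst, rfl⟩,
    ⟨dl, (hmem _).mp (hqsub dl hdl), Prod.ext rfl hdl2⟩, ?_, ?_⟩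
  · intro hbt
    exact no_antiparallel c' hcyc.edges_nodup hfirst (hqsub dl hdl) hdl2.symm hbt
  · intro d hd hfa
    rw [← hmem, hq, Walk.darts_cons, List.mem_cons] at hd
    rcases hd with rfl | hd
    · rfl
    · exact absurd hfa (dart_fst_ne_end q hnodup hd)
  · intro d hd hsa
    rw [← hmem, hq, Walk.darts_cons, List.mem_cons] at hd
    rcases hd with rfl | hd
    · exact absurd hsa.symm hab.ne
    · rw [dart_into_end_unique q hnodup hd hdl hsa hdl2]


end EulerAux

set_option linter.unusedSectionVars false

namespace EulerAux

open Classical in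
/-- The common vertex of two edges. -/
noncomputable def link {W : Type} {H : SimpleGraph W} (a b : H.edgeSet) : W :=
  if h : ∃ w, w ∈ (a : Sym2 W) ∧ w ∈ (b : Sym2 W) then h.choose
  else (Quot.out (a : Sym2 W)).1

lemma link_spec {W : Type} {H : SimpleGraph W} {a b : H.edgeSet} (hne : a ≠ b)
    {w : W} (hw1 : w ∈ (a : Sym2 W)) (hw2 : w ∈ (b : Sym2 W)) : link a b = w := by
  have h : ∃ w, w ∈ (a : Sym2 W) ∧ w ∈ (b : Sym2 W) := ⟨w, hw1, hw2⟩
  rw [link, dif_pos h]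
  by_contra hne2
  obtain ⟨h1, h2⟩ := h.choose_spec
  have ha : (a : Sym2 W) = s(h.choose, w) := (Sym2.mem_and_mem_iff hne2).mp ⟨h1, hw1⟩
  have hb : (b : Sym2 W) = s(h.choose, w) := (Sym2.mem_and_mem_iff hne2).mp ⟨h2, hw2⟩
  exact hne (Subtype.ext (ha.trans hb.symm))

variable {V : Type} [LinearOrder V] {G : SimpleGraph V}

local notation "W" => V ⊕ (G.edgeSet × Bool)

def E1 (e : G.edgeSet) : Sym2 (V ⊕ (G.edgeSet × Bool)) :=
  s(Sum.inl (Sym2.emin (e : Sym2 V)), Sum.inr (e, false))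
def E2 (e : G.edgeSet) : Sym2 (V ⊕ (G.edgeSet × Bool)) :=
  s(Sum.inr (e, false), Sum.inr (e, true))
def E3 (e : G.edgeSet) : Sym2 (V ⊕ (G.edgeSet × Bool)) :=
  s(Sum.inr (e, true), Sum.inl (Sym2.emax (e : Sym2 V)))

lemma E1_mem (e : G.edgeSet) : E1 e ∈ (subdiv2 G).edgeSet := by
  rw [E1, mem_edgeSet, subdiv2, fromRel_adj]
  exact ⟨by simp, Or.inl ⟨rfl, rfl⟩⟩

lemma E2_mem (e : G.edgeSet) : E2 e ∈ (subdiv2 G).edgeSet := by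
  rw [E2, mem_edgeSet, subdiv2, fromRel_adj]
  exact ⟨by simp, Or.inl ⟨rfl, rfl, rfl⟩⟩

lemma E3_mem (e : G.edgeSet) : E3 e ∈ (subdiv2 G).edgeSet := by
  rw [E3, mem_edgeSet, subdiv2, fromRel_adj]
  exact ⟨by simp, Or.inl ⟨rfl, rfl⟩⟩

lemma edge_cases {a : Sym2 (V ⊕ (G.edgeSet × Bool))} (ha : a ∈ (subdiv2 G).edgeSet) :
    ∃ e, a = E1 e ∨ a = E2 e ∨ a = E3 e := by
  induction a using Sym2.ind with
  | _ p q =>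
    rw [mem_edgeSet, subdiv2, fromRel_adj] at ha
    obtain ⟨hne, h | h⟩ := ha <;>
      rcases p with u | ⟨e, b⟩ <;> rcases q with u' | ⟨e', b'⟩ <;>
        simp only [subdivRel] at h
    · obtain ⟨rfl, rfl⟩ := h
      exact ⟨e', Or.inl rfl⟩
    · obtain ⟨rfl, rfl⟩ := h
      exact ⟨e, Or.inr (Or.inr rfl)⟩
    · obtain ⟨he, rfl, rfl⟩ := h
      obtain rfl : e = e' := Subtype.ext he
      exact ⟨e, Or.inr (Or.inl rfl)⟩
    · obtain ⟨rfl, rfl⟩ := h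
      exact ⟨e', Or.inr (Or.inr Sym2.eq_swap)⟩
    · obtain ⟨rfl, rfl⟩ := h
      exact ⟨e, Or.inl Sym2.eq_swap⟩
    · obtain ⟨he, rfl, rfl⟩ := h
      obtain rfl : e' = e := Subtype.ext he
      exact ⟨e', Or.inr (Or.inl Sym2.eq_swap)⟩

lemma incX (e : G.edgeSet) {a : Sym2 (V ⊕ (G.edgeSet × Bool))}
    (ha : a ∈ (subdiv2 G).edgeSet) (hm : Sum.inr (e, false) ∈ a) :
    a = E1 e ∨ a = E2 e := by
  obtain ⟨e', h | h | h⟩ := edge_cases ha <;> subst h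
  · rw [E1, Sym2.mem_iff] at hm
    obtain ⟨rfl, -⟩ : e = e' ∧ (false : Bool) = false := by
      simpa using hm.resolve_left (by simp)
    exact Or.inl rfl
  · rw [E2, Sym2.mem_iff] at hm
    obtain ⟨rfl, -⟩ : e = e' ∧ (false : Bool) = false := by
      simpa using hm.resolve_right (by simp)
    exact Or.inr rfl
  · rw [E3, Sym2.mem_iff] at hm
    exact absurd hm (by simp)

lemma incY (e : G.edgeSet) {a : Sym2 (V ⊕ (G.edgeSet × Bool))}
    (ha : a ∈ (subdiv2 G).edgeSet) (hm : Sum.inr (e, true) ∈ a) :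
    a = E2 e ∨ a = E3 e := by
  obtain ⟨e', h | h | h⟩ := edge_cases ha <;> subst h
  · rw [E1, Sym2.mem_iff] at hm
    exact absurd hm (by simp)
  · rw [E2, Sym2.mem_iff] at hm
    obtain ⟨rfl, -⟩ : e = e' ∧ (true : Bool) = true := by
      simpa using hm.resolve_left (by simp)
    exact Or.inl rfl
  · rw [E3, Sym2.mem_iff] at hm
    obtain ⟨rfl, -⟩ : e = e' ∧ (true : Bool) = true := by
      simpa using hm.resolve_right (by simp)
    exact Or.inr rfl

lemma E1_ne_E2 (e : G.edgeSet) : E1 e ≠ E2 e := by simp [E1, E2, Sym2.eq_iff]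
lemma E2_ne_E3 (e : G.edgeSet) : E2 e ≠ E3 e := by simp [E2, E3, Sym2.eq_iff]
lemma E1_ne_E3 (e : G.edgeSet) : E1 e ≠ E3 e := by simp [E1, E3, Sym2.eq_iff]

end EulerAux


namespace EulerAux

variable {V : Type} [LinearOrder V] {G : SimpleGraph V}

lemma X_mem_E2 (e : G.edgeSet) : Sum.inr (e, false) ∈ E2 e := Sym2.mem_iff.mpr (Or.inl rfl)
lemma Y_mem_E2 (e : G.edgeSet) : Sum.inr (e, true) ∈ E2 e := Sym2.mem_iff.mpr (Or.inr rfl)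
lemma X_mem_E1 (e : G.edgeSet) : Sum.inr (e, false) ∈ E1 e := Sym2.mem_iff.mpr (Or.inr rfl)
lemma u_mem_E1 (e : G.edgeSet) : Sum.inl (Sym2.emin (e : Sym2 V)) ∈ E1 e :=
  Sym2.mem_iff.mpr (Or.inl rfl)
lemma Y_mem_E3 (e : G.edgeSet) : Sum.inr (e, true) ∈ E3 e := Sym2.mem_iff.mpr (Or.inl rfl)
lemma v_mem_E3 (e : G.edgeSet) : Sum.inl (Sym2.emax (e : Sym2 V)) ∈ E3 e :=
  Sym2.mem_iff.mpr (Or.inr rfl)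

/-- Any edge sharing a vertex with the middle edge `E2 e` (other than `E2 e` itself)
is one of the two ends, and the shared vertex is determined. -/
lemma middle_nbr {e : G.edgeSet} {b : (subdiv2 G).edgeSet}
    (hne : (⟨E2 e, E2_mem e⟩ : (subdiv2 G).edgeSet) ≠ b) {w : V ⊕ (G.edgeSet × Bool)}
    (hw1 : w ∈ (b : Sym2 (V ⊕ (G.edgeSet × Bool)))) (hw2 : w ∈ E2 e) :
    (b = ⟨E1 e, E1_mem e⟩ ∧ w = Sum.inr (e, false)) ∨
    (b = ⟨E3 e, E3_mem e⟩ ∧ w = Sum.inr (e, true)) := by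
  rw [E2, Sym2.mem_iff] at hw2
  rcases hw2 with rfl | rfl
  · rcases incX e b.prop hw1 with h | h
    · exact Or.inl ⟨Subtype.ext h, rfl⟩
    · exact absurd (Subtype.ext h).symm hne
  · rcases incY e b.prop hw1 with h | h
    · exact absurd (Subtype.ext h).symm hne
    · exact Or.inr ⟨Subtype.ext h, rfl⟩

end EulerAux


namespace EulerAux

variable {V : Type} [LinearOrder V] {G : SimpleGraph V}

open Classical in
set_option maxHeartbeats 1000000 in
lemma key {x : (subdiv2 G).edgeSet} {c : (subdiv2 G).lineGraph.Walk x x}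
    (hc : c.IsHamiltonianCycle) (a b d : (subdiv2 G).edgeSet)
    (hb : ∃ dd ∈ c.darts, dd.toProd = (b, a))
    (hd : ∃ dd ∈ c.darts, dd.toProd = (a, d))
    (hbd : b ≠ d) :
    (a : Sym2 (V ⊕ (G.edgeSet × Bool))) = s(link b a, link a d) := by
  classical
  obtain ⟨ddb, hddb, hpb⟩ := hb
  obtain ⟨ddd, hddd, hpd⟩ := hd
  have hadj_ba : (subdiv2 G).lineGraph.Adj b a := by
    have h := ddb.adj
    rw [hpb] at h
    exact h
  have hadj_ad : (subdiv2 G).lineGraph.Adj a d := by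
    have h := ddd.adj
    rw [hpd] at h
    exact h
  have hcyc := hc.isCycle
  obtain ⟨s, t, hst, hout, hin, huo, hui⟩ :=
    cycle_dart_neighbors hcyc a (hc.mem_support a)
  have hds : d = s := by
    have h2 := huo ddd hddd (by rw [hpd])
    rw [hpd] at h2
    exact h2
  have hbt : b = t := by
    have h2 := hui ddb hddb (by rw [hpb])
    rw [hpb] at h2
    exact h2
  obtain ⟨hne_ba, wb, hwb1, hwb2⟩ := lineGraph_adj_iff_exists.mp hadj_ba
  obtain ⟨hne_ad, wd, hwd1, hwd2⟩ := lineGraph_adj_iff_exists.mp hadj_ad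
  obtain ⟨e, hE | hE | hE⟩ := edge_cases a.prop
  -- Case: a is the first end edge E1 e
  · have haA1 : a = ⟨E1 e, E1_mem e⟩ := Subtype.ext hE
    obtain ⟨s2, t2, hst2, ⟨do2, hdo2, hpo2⟩, ⟨di2, hdi2, hpi2⟩, huo2, hui2⟩ :=
      cycle_dart_neighbors hcyc ⟨E2 e, E2_mem e⟩ (hc.mem_support _)
    have hadj_s2 : (subdiv2 G).lineGraph.Adj ⟨E2 e, E2_mem e⟩ s2 := by
      have h := do2.adj; rw [hpo2] at h; exact h
    have hadj_t2 : (subdiv2 G).lineGraph.Adj t2 ⟨E2 e, E2_mem e⟩ := by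
      have h := di2.adj; rw [hpi2] at h; exact h
    obtain ⟨hne2s, w2s, hw2s1, hw2s2⟩ := lineGraph_adj_iff_exists.mp hadj_s2
    obtain ⟨hne2t, w2t, hw2t1, hw2t2⟩ := lineGraph_adj_iff_exists.mp hadj_t2
    have hs2 := middle_nbr hne2s hw2s2 hw2s1
    have ht2 := middle_nbr hne2t.symm hw2t1 hw2t2
    have hA2bd : (⟨E2 e, E2_mem e⟩ : (subdiv2 G).edgeSet) = b ∨
        (⟨E2 e, E2_mem e⟩ : (subdiv2 G).edgeSet) = d := by
      rcases hs2 with ⟨hs2, -⟩ | ⟨hs2, -⟩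
      · left
        have hsnd : do2.snd = a := by rw [hpo2]; show s2 = a; rw [hs2, haA1]
        have hfst := hui do2 hdo2 hsnd
        rw [hpo2] at hfst
        rw [show (⟨E2 e, E2_mem e⟩ : (subdiv2 G).edgeSet) = t from hfst, hbt]
      · rcases ht2 with ⟨ht2, -⟩ | ⟨ht2, -⟩
        · right
          have hfst : di2.fst = a := by rw [hpi2]; show t2 = a; rw [ht2, haA1]
          have hsnd := huo di2 hdi2 hfst
          rw [hpi2] at hsnd
          rw [show (⟨E2 e, E2_mem e⟩ : (subdiv2 G).edgeSet) = s from hsnd, hds]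
        · exact absurd (hs2.trans ht2.symm) hst2
    rcases hA2bd with hA2 | hA2
    · -- middle edge is the predecessor b
      have hlba : link b a = Sum.inr (e, false) := by
        refine link_spec hne_ba ?_ ?_
        · rw [← hA2]; exact X_mem_E2 e
        · rw [hE]; exact X_mem_E1 e
      have hwd : wd = Sum.inl (Sym2.emin (e : Sym2 V)) := by
        rw [hE, E1, Sym2.mem_iff] at hwd1
        rcases hwd1 with h | h
        · exact h
        · subst h
          rcases incX e d.prop hwd2 with h | h
          · exact absurd (haA1.trans (Subtype.ext h).symm) hne_ad
          · exact absurd ((Subtype.ext h).trans hA2).symm hbd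
      have hlad : link a d = Sum.inl (Sym2.emin (e : Sym2 V)) :=
        link_spec hne_ad (hwd ▸ hwd1) (hwd ▸ hwd2)
      rw [hlba, hlad, hE]
      exact Sym2.eq_swap
    · -- middle edge is the successor d
      have hlad : link a d = Sum.inr (e, false) := by
        refine link_spec hne_ad ?_ ?_
        · rw [hE]; exact X_mem_E1 e
        · rw [← hA2]; exact X_mem_E2 e
      have hwb : wb = Sum.inl (Sym2.emin (e : Sym2 V)) := by
        rw [hE, E1, Sym2.mem_iff] at hwb2
        rcases hwb2 with h | h
        · exact h
        · subst h
          rcases incX e b.prop hwb1 with h | h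
          · exact absurd ((Subtype.ext h).trans haA1.symm) hne_ba
          · exact absurd ((Subtype.ext h).trans hA2) hbd
      have hlba : link b a = Sum.inl (Sym2.emin (e : Sym2 V)) :=
        link_spec hne_ba (hwb ▸ hwb1) (hwb ▸ hwb2)
      rw [hlba, hlad, hE]
      rfl
  -- Case: a is the middle edge E2 e
  · have haA2 : a = ⟨E2 e, E2_mem e⟩ := Subtype.ext hE
    have hb' := middle_nbr (haA2 ▸ hne_ba.symm) hwb1 (hE ▸ hwb2)
    have hd' := middle_nbr (haA2 ▸ hne_ad) hwd2 (hE ▸ hwd1)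
    rcases hb' with ⟨hbA, hwbv⟩ | ⟨hbA, hwbv⟩ <;> rcases hd' with ⟨hdA, hwdv⟩ | ⟨hdA, hwdv⟩
    · exact absurd (hbA.trans hdA.symm) hbd
    · rw [link_spec hne_ba hwb1 hwb2, link_spec hne_ad hwd1 hwd2, hwbv, hwdv, hE]
      rfl
    · rw [link_spec hne_ba hwb1 hwb2, link_spec hne_ad hwd1 hwd2, hwbv, hwdv, hE]
      exact Sym2.eq_swap
    · exact absurd (hbA.trans hdA.symm) hbd
  -- Case: a is the last end edge E3 e
  · have haA3 : a = ⟨E3 e, E3_mem e⟩ := Subtype.ext hE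
    obtain ⟨s2, t2, hst2, ⟨do2, hdo2, hpo2⟩, ⟨di2, hdi2, hpi2⟩, huo2, hui2⟩ :=
      cycle_dart_neighbors hcyc ⟨E2 e, E2_mem e⟩ (hc.mem_support _)
    have hadj_s2 : (subdiv2 G).lineGraph.Adj ⟨E2 e, E2_mem e⟩ s2 := by
      have h := do2.adj; rw [hpo2] at h; exact h
    have hadj_t2 : (subdiv2 G).lineGraph.Adj t2 ⟨E2 e, E2_mem e⟩ := by
      have h := di2.adj; rw [hpi2] at h; exact h
    obtain ⟨hne2s, w2s, hw2s1, hw2s2⟩ := lineGraph_adj_iff_exists.mp hadj_s2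
    obtain ⟨hne2t, w2t, hw2t1, hw2t2⟩ := lineGraph_adj_iff_exists.mp hadj_t2
    have hs2 := middle_nbr hne2s hw2s2 hw2s1
    have ht2 := middle_nbr hne2t.symm hw2t1 hw2t2
    have hA2bd : (⟨E2 e, E2_mem e⟩ : (subdiv2 G).edgeSet) = b ∨
        (⟨E2 e, E2_mem e⟩ : (subdiv2 G).edgeSet) = d := by
      rcases hs2 with ⟨hs2, -⟩ | ⟨hs2, -⟩
      · rcases ht2 with ⟨ht2, -⟩ | ⟨ht2, -⟩
        · exact absurd (hs2.trans ht2.symm) hst2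
        · right
          have hfst : di2.fst = a := by rw [hpi2]; show t2 = a; rw [ht2, haA3]
          have hsnd := huo di2 hdi2 hfst
          rw [hpi2] at hsnd
          rw [show (⟨E2 e, E2_mem e⟩ : (subdiv2 G).edgeSet) = s from hsnd, hds]
      · left
        have hsnd : do2.snd = a := by rw [hpo2]; show s2 = a; rw [hs2, haA3]
        have hfst := hui do2 hdo2 hsnd
        rw [hpo2] at hfst
        rw [show (⟨E2 e, E2_mem e⟩ : (subdiv2 G).edgeSet) = t from hfst, hbt]
    rcases hA2bd with hA2 | hA2
    · -- middle edge is the predecessor b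
      have hlba : link b a = Sum.inr (e, true) := by
        refine link_spec hne_ba ?_ ?_
        · rw [← hA2]; exact Y_mem_E2 e
        · rw [hE]; exact Y_mem_E3 e
      have hwd : wd = Sum.inl (Sym2.emax (e : Sym2 V)) := by
        rw [hE, E3, Sym2.mem_iff] at hwd1
        rcases hwd1 with h | h
        · subst h
          rcases incY e d.prop hwd2 with h | h
          · exact absurd ((Subtype.ext h).trans hA2).symm hbd
          · exact absurd (haA3.trans (Subtype.ext h).symm) hne_ad
        · exact h
      have hlad : link a d = Sum.inl (Sym2.emax (e : Sym2 V)) :=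
        link_spec hne_ad (hwd ▸ hwd1) (hwd ▸ hwd2)
      rw [hlba, hlad, hE]
      rfl
    · -- middle edge is the successor d
      have hlad : link a d = Sum.inr (e, true) := by
        refine link_spec hne_ad ?_ ?_
        · rw [hE]; exact Y_mem_E3 e
        · rw [← hA2]; exact Y_mem_E2 e
      have hwb : wb = Sum.inl (Sym2.emax (e : Sym2 V)) := by
        rw [hE, E3, Sym2.mem_iff] at hwb2
        rcases hwb2 with h | h
        · subst h
          rcases incY e b.prop hwb1 with h | h
          · exact absurd ((Subtype.ext h).trans hA2) hbd
          · exact absurd ((Subtype.ext h).trans haA3.symm) hne_ba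
        · exact h
      have hlba : link b a = Sum.inl (Sym2.emax (e : Sym2 V)) :=
        link_spec hne_ba (hwb ▸ hwb1) (hwb ▸ hwb2)
      rw [hlba, hlad, hE]
      exact Sym2.eq_swap

end EulerAux


namespace EulerAux

variable {V : Type} [LinearOrder V] {G : SimpleGraph V}

open Classical in
lemma build {x : (subdiv2 G).edgeSet} (c : (subdiv2 G).lineGraph.Walk x x)
    (hc : c.IsHamiltonianCycle) :
    ∀ (a y : (subdiv2 G).edgeSet) (q : (subdiv2 G).lineGraph.Walk a y),
      (∀ dd, dd ∈ q.darts → dd ∈ c.darts) →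
      ∀ b : (subdiv2 G).edgeSet, (∃ dd ∈ c.darts, dd.toProd = (b, a)) →
      ∃ (b' : (subdiv2 G).edgeSet) (_ : ∃ dd ∈ c.darts, dd.toProd = (b', y))
        (p : (subdiv2 G).Walk (link b a) (link b' y)),
        p.edges = q.support.dropLast.map Subtype.val := by
  intro a y q
  induction q with
  | nil =>
    intro _ b hb
    exact ⟨b, hb, Walk.nil, by simp⟩
  | @cons a a' y h q ih =>
    intro hsub b hb
    have hd_first : (⟨(a, a'), h⟩ : (subdiv2 G).lineGraph.Dart) ∈ c.darts :=
      hsub _ (by rw [Walk.darts_cons]; exact List.mem_cons_self)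
    have hbd : b ≠ a' := by
      rintro rfl
      obtain ⟨ddb, hddb, hpb⟩ := hb
      refine no_antiparallel c hc.isCycle.isCircuit.isTrail.edges_nodup hddb hd_first ?_ ?_
      · rw [hpb]
      · rw [hpb]
    have hkey := key hc a b a' hb ⟨_, hd_first, rfl⟩ hbd
    have hadj : (subdiv2 G).Adj (link b a) (link a a') := by
      have h2 := a.prop
      rw [hkey] at h2
      exact (subdiv2 G).mem_edgeSet.mp h2
    obtain ⟨b', hb', p, hp⟩ := ih
      (fun dd hdd => hsub dd (by rw [Walk.darts_cons]; exact List.mem_cons_of_mem _ hdd))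
      a ⟨_, hd_first, rfl⟩
    refine ⟨b', hb', Walk.cons hadj p, ?_⟩
    rw [Walk.edges_cons, hp, Walk.support_cons, q.support_eq_cons, List.dropLast_cons₂,
      List.map_cons, ← hkey, ← q.support_eq_cons]

lemma dropLast_count {α : Type*} [DecidableEq α] {Γ : SimpleGraph α} {x : α} {c : Γ.Walk x x}
    (hc : c.IsHamiltonianCycle) (a : α) : c.support.dropLast.count a = 1 := by
  have hnil := hc.isCycle.not_nil
  have htail : ∀ v, c.support.tail.count v = 1 := by
    intro v
    have h2 := hc.isHamiltonian_tail v
    rwa [← Walk.cons_support_tail hnil, List.tail_cons]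
  have htne : c.support.tail ≠ [] := by
    intro h
    have h3 := hc.isCycle.three_le_length
    have h4 : c.support.length = c.length + 1 := c.length_support
    rw [c.support_eq_cons, h] at h4
    simp only [List.length_cons, List.length_nil] at h4
    omega
  have hdrop : c.support.dropLast = x :: c.support.tail.dropLast := by
    conv_lhs => rw [c.support_eq_cons]
    obtain ⟨z, l, hzl⟩ : ∃ z l, c.support.tail = z :: l := by
      rcases hzl : c.support.tail with _ | ⟨z, l⟩
      · exact absurd hzl htne
      · exact ⟨z, l, rfl⟩
    rw [hzl, List.dropLast_cons₂]
  have hsplit : c.support.tail.dropLast ++ [x] = c.support.tail := by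
    have hconcat := List.dropLast_append_getLast c.support_ne_nil
    rw [support_getLast c, hdrop] at hconcat
    conv_rhs at hconcat => rw [c.support_eq_cons]
    rw [List.cons_append] at hconcat
    exact (List.cons.injEq _ _ _ _ ▸ hconcat).2
  have hcount : c.support.tail.dropLast.count a + List.count a [x] = 1 := by
    rw [← List.count_append, hsplit]
    exact htail a
  rw [hdrop]
  by_cases hax : a = x
  · subst hax
    rw [List.count_cons_self]
    have h5 : List.count a [a] = 1 := by simp
    omega
  · rw [List.count_cons_of_ne (Ne.symm hax)]
    have h5 : List.count a [x] = 0 := by simp [Ne.symm hax]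
    omega

end EulerAux


open Classical in
/-- every Hamiltonian cycle of the line graph of the twice-subdivided
graph `G'` arises from an Euler tour of `G'`: the sequence of edges of `G'`
corresponding to the vertex sequence of the Hamiltonian cycle is the edge sequence
of a closed Eulerian walk of `G'`. -/
theorem hamCycle_lineGraph_subdiv2_gives_eulerTour
    {V : Type} [LinearOrder V] (G : SimpleGraph V)
    {x : (subdiv2 G).edgeSet} (c : (subdiv2 G).lineGraph.Walk x x)
    (hc : c.IsHamiltonianCycle) :
    ∃ (v : V ⊕ (G.edgeSet × Bool)) (p : (subdiv2 G).Walk v v),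
      p.IsEulerian ∧ p.edges = c.support.dropLast.map Subtype.val := by
  classical
  obtain ⟨s, t, hst, hout, ⟨din, hdin, hpdin⟩, huo, hui⟩ :=
    EulerAux.cycle_dart_neighbors hc.isCycle x (hc.mem_support x)
  obtain ⟨b', hb', p, hp⟩ := EulerAux.build c hc x x c (fun _ h => h) t ⟨din, hdin, hpdin⟩
  obtain rfl : b' = t := by
    obtain ⟨dd, hdd, hpp⟩ := hb'
    have h2 := hui dd hdd (by rw [hpp])
    rw [hpp] at h2
    exact h2
  refine ⟨EulerAux.link b' x, p, ?_, hp⟩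
  intro e he
  rw [hp]
  have h1 := List.count_map_of_injective (α := (subdiv2 G).edgeSet)
    c.support.dropLast Subtype.val Subtype.val_injective ⟨e, he⟩
  exact h1.trans (by convert EulerAux.dropLast_count hc (⟨e, he⟩ : (subdiv2 G).edgeSet))
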